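/- With notation as above, the elements {Q_φ : φ admissible} form a complete set of orthogonal idempotents in R(Γ): Σ_{φ ∈ C(Γ)} Q_φ = 1 and Q_φ·Q_ψ = δ_{φψ}·Q_φ, and R(Γ) decomposes as a direct sum of ℂ-algebras R(Γ) ≅ ⊕_{φ ∈ AC(Γ)} Q_φ·ℂ, each summand being one-dimensional. -/

import Mathlib

noncomputable section

open MvPolynomial

/-- The ideal of relations defining `R(Γ)`: `X_j² = hX_j + a` for every edge `j`, and
`X_j + X_k = h`, `X_j·X_k = -a` for every pair of edges `{j,k}` meeting at a vertex,
where `h = α + β` and `a = -αβ`. -/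
def relIdeal (α β : ℂ) (E : Type) (V : Set (E × E)) : Ideal (MvPolynomial E ℂ) :=
  Ideal.span
    ({p | ∃ j : E, p = X j ^ 2 - C (α + β) * X j - C (-(α * β))} ∪
     {p | ∃ jk ∈ V, p = X jk.1 + X jk.2 - C (α + β)} ∪
     {p | ∃ jk ∈ V, p = X jk.1 * X jk.2 + C (-(α * β))})

/-- The algebra `R(Γ)` associated to a graph with edge set `E` and vertex pairs `V`. -/
abbrev RGamma (α β : ℂ) (E : Type) (V : Set (E × E)) : Type :=
  MvPolynomial E ℂ ⧸ relIdeal α β E V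

/-- The generator `X_j` of `R(Γ)`. -/
def xg (α β : ℂ) (E : Type) (V : Set (E × E)) (j : E) : RGamma α β E V :=
  Ideal.Quotient.mk _ (X j)

/-- `Q_c(t)` for a color `c ∈ {α, β}`: `Q_α(t) = (α-β)⁻¹(t - β)`, `Q_β(t) = (β-α)⁻¹(t - α)`. -/
def Qcolor (α β : ℂ) {S : Type} [CommRing S] [Algebra ℂ S] (c : ℂ) (t : S) : S :=
  if c = α then (α - β)⁻¹ • (t - algebraMap ℂ S β) else (β - α)⁻¹ • (t - algebraMap ℂ S α)

/-- `Q_φ = ∏_{j ∈ E} Q_{φ(j)}(X_j)` in `R(Γ)`. -/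
def Qphi (α β : ℂ) (E : Type) [Fintype E] (V : Set (E × E)) (φ : E → ℂ) : RGamma α β E V :=
  ∏ j : E, Qcolor α β (φ j) (xg α β E V j)

/-- The coloring `E → {α, β}` encoded by a Boolean function: `true ↦ α`, `false ↦ β`. -/
def colorOf (α β : ℂ) (c : E → Bool) : E → ℂ := fun j => if c j then α else β

/-- A Boolean coloring is admissible when the two edges of each vertex pair get
different colors. -/
def Admissible (E : Type) (V : Set (E × E)) (c : E → Bool) : Prop :=
  ∀ p ∈ V, c p.1 ≠ c p.2

section basics
variable (α β : ℂ) (E : Type) (V : Set (E × E))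

lemma mem_rel1 (j : E) :
    (X j ^ 2 - C (α + β) * X j - C (-(α * β)) : MvPolynomial E ℂ) ∈ relIdeal α β E V :=
  Ideal.subset_span (Or.inl (Or.inl ⟨j, rfl⟩))

lemma mem_rel2 {jk : E × E} (h : jk ∈ V) :
    (X jk.1 + X jk.2 - C (α + β) : MvPolynomial E ℂ) ∈ relIdeal α β E V :=
  Ideal.subset_span (Or.inl (Or.inr ⟨jk, h, rfl⟩))

lemma mem_rel3 {jk : E × E} (h : jk ∈ V) :
    (X jk.1 * X jk.2 + C (-(α * β)) : MvPolynomial E ℂ) ∈ relIdeal α β E V :=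
  Ideal.subset_span (Or.inr ⟨jk, h, rfl⟩)

lemma alg_eq (r : ℂ) :
    algebraMap ℂ (RGamma α β E V) r = Ideal.Quotient.mk (relIdeal α β E V) (C r) := by
  rw [← MvPolynomial.algebraMap_eq, Ideal.Quotient.mk_algebraMap]

lemma rel1q (j : E) :
    xg α β E V j * xg α β E V j =
      (algebraMap ℂ _ α + algebraMap ℂ _ β) * xg α β E V j
        - algebraMap ℂ _ α * algebraMap ℂ _ β := by
  have h0 : Ideal.Quotient.mk (relIdeal α β E V)
      (X j ^ 2 - C (α + β) * X j - C (-(α * β))) = 0 :=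
    Ideal.Quotient.eq_zero_iff_mem.mpr (mem_rel1 α β E V j)
  simp only [C_add, C_neg, C_mul, map_sub, map_add, map_neg, map_mul, map_pow] at h0
  simp only [alg_eq, xg]
  linear_combination h0

lemma rel2q {jk : E × E} (h : jk ∈ V) :
    xg α β E V jk.1 + xg α β E V jk.2 = algebraMap ℂ _ α + algebraMap ℂ _ β := by
  have h0 : Ideal.Quotient.mk (relIdeal α β E V)
      (X jk.1 + X jk.2 - C (α + β)) = 0 :=
    Ideal.Quotient.eq_zero_iff_mem.mpr (mem_rel2 α β E V h)
  simp only [C_add, map_sub, map_add] at h0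
  simp only [alg_eq, xg]
  linear_combination h0

lemma rel3q {jk : E × E} (h : jk ∈ V) :
    xg α β E V jk.1 * xg α β E V jk.2 = algebraMap ℂ _ α * algebraMap ℂ _ β := by
  have h0 : Ideal.Quotient.mk (relIdeal α β E V)
      (X jk.1 * X jk.2 + C (-(α * β))) = 0 :=
    Ideal.Quotient.eq_zero_iff_mem.mpr (mem_rel3 α β E V h)
  simp only [C_neg, C_mul, map_add, map_neg, map_mul] at h0
  simp only [alg_eq, xg]
  linear_combination h0

end basics

section qcolor
variable (α β : ℂ) {S : Type} [CommRing S] [Algebra ℂ S]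

lemma Qcolor_a (t : S) : Qcolor α β α t = (α - β)⁻¹ • (t - algebraMap ℂ S β) := if_pos rfl

lemma Qcolor_b (hab : α ≠ β) (t : S) :
    Qcolor α β β t = (β - α)⁻¹ • (t - algebraMap ℂ S α) := if_neg hab.symm

lemma Qcolor_add (hab : α ≠ β) (t : S) : Qcolor α β α t + Qcolor α β β t = 1 := by
  have hne : α - β ≠ 0 := sub_ne_zero.mpr hab
  rw [Qcolor_a, Qcolor_b _ _ hab, show (β - α)⁻¹ = -(α - β)⁻¹ by rw [← neg_sub, inv_neg],
    neg_smul, ← sub_eq_add_neg, ← smul_sub]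
  have h2 : (t - algebraMap ℂ S β) - (t - algebraMap ℂ S α) = (α - β) • 1 := by
    rw [Algebra.smul_def, mul_one, map_sub]; ring
  rw [h2, smul_smul, inv_mul_cancel₀ hne, one_smul]

variable (hab : α ≠ β) {t : S}
  (ht : t * t = (algebraMap ℂ S α + algebraMap ℂ S β) * t - algebraMap ℂ S α * algebraMap ℂ S β)

include hab ht in
lemma Qcolor_orth : Qcolor α β α t * Qcolor α β β t = 0 := by
  rw [Qcolor_a, Qcolor_b α β hab, smul_mul_smul_comm]
  rw [show (t - algebraMap ℂ S β) * (t - algebraMap ℂ S α) = 0 by linear_combination ht,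
    smul_zero]

include ht in
lemma Qcolor_absorb_a : t * Qcolor α β α t = α • Qcolor α β α t := by
  rw [Qcolor_a, mul_smul_comm, smul_comm]
  congr 1
  rw [Algebra.smul_def]
  linear_combination ht

include hab ht in
lemma Qcolor_absorb_b : t * Qcolor α β β t = β • Qcolor α β β t := by
  rw [Qcolor_b α β hab, mul_smul_comm, smul_comm]
  congr 1
  rw [Algebra.smul_def]
  linear_combination ht

variable {s : S} (hsum : s + t = algebraMap ℂ S α + algebraMap ℂ S β)
  (hmul : s * t = algebraMap ℂ S α * algebraMap ℂ S β)

include hsum hmul in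
lemma Qcolor_vertex_a : Qcolor α β α s * Qcolor α β α t = 0 := by
  rw [Qcolor_a, Qcolor_a, smul_mul_smul_comm]
  rw [show (s - algebraMap ℂ S β) * (t - algebraMap ℂ S β) = 0 by
      linear_combination hmul - algebraMap ℂ S β * hsum, smul_zero]

include hab hsum hmul in
lemma Qcolor_vertex_b : Qcolor α β β s * Qcolor α β β t = 0 := by
  rw [Qcolor_b α β hab, Qcolor_b α β hab, smul_mul_smul_comm]
  rw [show (s - algebraMap ℂ S α) * (t - algebraMap ℂ S α) = 0 by
      linear_combination hmul - algebraMap ℂ S α * hsum, smul_zero]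

end qcolor

section evalvals
variable {α β : ℂ}

lemma Qcolor_eval_aa (hab : α ≠ β) : Qcolor α β α (algebraMap ℂ ℂ α) = 1 := by
  have hne : α - β ≠ 0 := sub_ne_zero.mpr hab
  rw [Qcolor_a]; simp only [Algebra.algebraMap_self, RingHom.id_apply, smul_eq_mul]
  field_simp

lemma Qcolor_eval_ab : Qcolor α β α (algebraMap ℂ ℂ β) = 0 := by
  rw [Qcolor_a]; simp

lemma Qcolor_eval_bb (hab : α ≠ β) : Qcolor α β β (algebraMap ℂ ℂ β) = 1 := by
  have hne : β - α ≠ 0 := sub_ne_zero.mpr hab.symm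
  rw [Qcolor_b α β hab]; simp only [Algebra.algebraMap_self, RingHom.id_apply, smul_eq_mul]
  field_simp

lemma Qcolor_eval_ba (hab : α ≠ β) : Qcolor α β β (algebraMap ℂ ℂ α) = 0 := by
  rw [Qcolor_b α β hab]; simp

lemma map_Qcolor {S T : Type} [CommRing S] [Algebra ℂ S] [CommRing T] [Algebra ℂ T]
    (g : S →ₐ[ℂ] T) (γ : ℂ) (t : S) : g (Qcolor α β γ t) = Qcolor α β γ (g t) := by
  unfold Qcolor
  split <;> rw [map_smul, map_sub, AlgHom.commutes]

end evalvals

section derived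
variable (α β : ℂ) (hab : α ≠ β) (E : Type) [Fintype E] [DecidableEq E] (V : Set (E × E))

include hab in
lemma Qphi_sum : ∑ c : E → Bool, Qphi α β E V (colorOf α β c) = 1 := by
  have h2 : ∀ j : E, (∑ b : Bool, Qcolor α β (if b then α else β) (xg α β E V j)) = 1 := by
    intro j
    rw [Fintype.sum_bool]
    simp only [if_true, if_false]
    exact Qcolor_add α β hab _
  calc ∑ c : E → Bool, Qphi α β E V (colorOf α β c)
      = ∑ c : E → Bool, ∏ j : E,
          (fun j (b : Bool) => Qcolor α β (if b then α else β) (xg α β E V j)) j (c j) := rfl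
    _ = ∏ j : E, ∑ b : Bool,
          (fun j (b : Bool) => Qcolor α β (if b then α else β) (xg α β E V j)) j b :=
        (Fintype.prod_sum
          (fun j (b : Bool) => Qcolor α β (if b then α else β) (xg α β E V j))).symm
    _ = 1 := Finset.prod_eq_one fun j _ => h2 j

include hab in
lemma Qcolor_factor_mul (c c' : E → Bool) (j : E) :
    Qcolor α β (colorOf α β c j) (xg α β E V j) * Qcolor α β (colorOf α β c' j) (xg α β E V j)
      = if c j = c' j then Qcolor α β (colorOf α β c j) (xg α β E V j) else 0 := by
  have ht := rel1q α β E V j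
  have h1 := Qcolor_add α β hab (xg α β E V j)
  have h2 := Qcolor_orth α β hab ht
  rcases hc : c j <;> rcases hc' : c' j <;> simp only [colorOf, hc, hc', if_true, if_false,
    Bool.false_eq_true, Bool.true_eq_false, reduceIte]
  · linear_combination Qcolor α β β (xg α β E V j) * h1 - h2
  · linear_combination h2
  · linear_combination h2
  · linear_combination Qcolor α β α (xg α β E V j) * h1 - h2

include hab in
lemma Qphi_orth (c c' : E → Bool) :
    Qphi α β E V (colorOf α β c) * Qphi α β E V (colorOf α β c') =
      if c = c' then Qphi α β E V (colorOf α β c) else 0 := by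
  unfold Qphi
  rw [← Finset.prod_mul_distrib]
  by_cases h : c = c'
  · subst h
    rw [if_pos rfl]
    refine Finset.prod_congr rfl fun j _ => ?_
    rw [Qcolor_factor_mul α β hab E V c c j, if_pos rfl]
  · rw [if_neg h]
    obtain ⟨j, hj⟩ := Function.ne_iff.mp h
    exact Finset.prod_eq_zero (Finset.mem_univ j)
      (by rw [Qcolor_factor_mul α β hab E V c c' j, if_neg hj])

include hab in
lemma Qphi_nonadmissible {c : E → Bool} (hc : ¬ Admissible E V c) :
    Qphi α β E V (colorOf α β c) = 0 := by
  simp only [Admissible, not_forall] at hc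
  obtain ⟨p, hp, hpe⟩ := hc
  rw [not_not] at hpe
  have hsum := rel2q α β E V hp
  have hmul := rel3q α β E V hp
  have hzero : Qcolor α β (colorOf α β c p.1) (xg α β E V p.1) *
      Qcolor α β (colorOf α β c p.2) (xg α β E V p.2) = 0 := by
    rcases hb : c p.1 with _ | _ <;>
      simp only [colorOf, hb, hpe ▸ hb, ← hpe, if_true, if_false, Bool.false_eq_true, reduceIte]
    · exact Qcolor_vertex_b α β hab hsum hmul
    · exact Qcolor_vertex_a α β hsum hmul
  by_cases hne : p.1 = p.2
  · -- degenerate loop: the ring is trivial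
    have h11 := Qcolor_add α β hab (xg α β E V p.1)
    have h12 := Qcolor_add α β hab (xg α β E V p.2)
    have hva := Qcolor_vertex_a α β (s := xg α β E V p.1) (t := xg α β E V p.2) hsum hmul
    have hvb := Qcolor_vertex_b α β hab (s := xg α β E V p.1) (t := xg α β E V p.2) hsum hmul
    have horth := Qcolor_orth α β hab (rel1q α β E V p.1)
    rw [← hne] at hva hvb
    have hone : (1 : RGamma α β E V) = 0 := by
      linear_combination -(Qcolor α β α (xg α β E V p.1) + Qcolor α β β (xg α β E V p.1) + 1) * h11
        + hva + hvb + 2 * horth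
    rw [← mul_one (Qphi α β E V (colorOf α β c)), hone, mul_zero]
  · unfold Qphi
    rw [← Finset.mul_prod_erase _ _ (Finset.mem_univ p.1),
      ← Finset.mul_prod_erase _ _ (Finset.mem_erase.mpr ⟨Ne.symm hne, Finset.mem_univ p.2⟩),
      ← mul_assoc, hzero, zero_mul]

include hab in
lemma xg_mul_Qphi (c : E → Bool) (j : E) :
    xg α β E V j * Qphi α β E V (colorOf α β c) =
      colorOf α β c j • Qphi α β E V (colorOf α β c) := by
  unfold Qphi
  rw [← Finset.mul_prod_erase _ _ (Finset.mem_univ j), ← mul_assoc]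
  have habs : xg α β E V j * Qcolor α β (colorOf α β c j) (xg α β E V j)
      = colorOf α β c j • Qcolor α β (colorOf α β c j) (xg α β E V j) := by
    rcases hb : c j <;>
      simp only [colorOf, hb, if_true, if_false, Bool.false_eq_true, reduceIte]
    · exact Qcolor_absorb_b α β hab (rel1q α β E V j)
    · exact Qcolor_absorb_a α β (rel1q α β E V j)
  rw [habs, smul_mul_assoc]

include hab in
lemma mk_mul_Qphi (c : E → Bool) (y : MvPolynomial E ℂ) :
    ∃ s : ℂ, Ideal.Quotient.mk (relIdeal α β E V) y * Qphi α β E V (colorOf α β c)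
      = s • Qphi α β E V (colorOf α β c) := by
  induction y using MvPolynomial.induction_on with
  | C r => exact ⟨r, by rw [← alg_eq]; exact (Algebra.smul_def r _).symm⟩
  | add p q hp hq =>
      obtain ⟨s1, h1⟩ := hp; obtain ⟨s2, h2⟩ := hq
      exact ⟨s1 + s2, by rw [map_add, add_mul, h1, h2, add_smul]⟩
  | mul_X p j hp =>
      obtain ⟨s1, h1⟩ := hp
      refine ⟨s1 * colorOf α β c j, ?_⟩
      rw [map_mul, mul_assoc,
        show Ideal.Quotient.mk (relIdeal α β E V) (X j) = xg α β E V j from rfl,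
        xg_mul_Qphi α β hab E V c j, mul_smul_comm, h1, smul_smul,
        mul_comm (colorOf α β c j)]

include hab in
lemma exists_ev {c : E → Bool} (hc : Admissible E V c) :
    ∃ ev : RGamma α β E V →ₐ[ℂ] ℂ,
      ∀ c' : E → Bool, ev (Qphi α β E V (colorOf α β c')) = if c' = c then 1 else 0 := by
  set φ := colorOf α β c with hφ
  have hle : relIdeal α β E V ≤ RingHom.ker ((aeval φ : MvPolynomial E ℂ →ₐ[ℂ] ℂ)).toRingHom := by
    rw [relIdeal, Ideal.span_le]
    rintro p hp
    simp only [Set.mem_union, Set.mem_setOf_eq] at hp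
    rw [SetLike.mem_coe, RingHom.mem_ker]
    rcases hp with (⟨j, rfl⟩ | ⟨jk, hjk, rfl⟩) | ⟨jk, hjk, rfl⟩
    · simp only [AlgHom.toRingHom_eq_coe, RingHom.coe_coe, map_sub, map_pow, map_mul, map_neg,
        aeval_X, aeval_C, Algebra.algebraMap_self_apply]
      rcases hb : c j <;> simp only [hφ, colorOf, hb, if_true, if_false, Bool.false_eq_true,
        reduceIte] <;> ring
    · have hne := hc jk hjk
      simp only [AlgHom.toRingHom_eq_coe, RingHom.coe_coe, map_sub, map_add, aeval_X, aeval_C,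
        Algebra.algebraMap_self_apply]
      rcases h1 : c jk.1 <;> rcases h2 : c jk.2 <;>
        simp only [hφ, colorOf, h1, h2, if_true, if_false, Bool.false_eq_true, reduceIte] <;>
        first
          | (exfalso; rw [h1, h2] at hne; exact hne rfl)
          | ring
    · have hne := hc jk hjk
      simp only [AlgHom.toRingHom_eq_coe, RingHom.coe_coe, map_add, map_mul, map_neg,
        aeval_X, aeval_C, Algebra.algebraMap_self_apply]
      rcases h1 : c jk.1 <;> rcases h2 : c jk.2 <;>
        simp only [hφ, colorOf, h1, h2, if_true, if_false, Bool.false_eq_true, reduceIte] <;>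
        first
          | (exfalso; rw [h1, h2] at hne; exact hne rfl)
          | ring
  have hker : ∀ p ∈ relIdeal α β E V, aeval φ p = 0 := fun p hp => hle hp
  refine ⟨Ideal.Quotient.liftₐ _ (aeval φ) hker, fun c' => ?_⟩
  set ev := Ideal.Quotient.liftₐ (relIdeal α β E V) (aeval φ) hker with hev
  have hmk : ∀ y : MvPolynomial E ℂ, ev (Ideal.Quotient.mk _ y) = aeval φ y := fun y => by
    rw [hev, Ideal.Quotient.liftₐ_apply]
    rfl
  have hfac : ∀ j : E, ev (Qcolor α β (colorOf α β c' j) (xg α β E V j))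
      = if c' j = c j then 1 else 0 := by
    intro j
    rw [map_Qcolor, show ev (xg α β E V j) = φ j from by rw [xg, hmk, aeval_X]]
    rcases h1 : c' j <;> rcases h2 : c j <;>
      simp only [hφ, colorOf, h1, h2, if_true, if_false, Bool.false_eq_true, Bool.true_eq_false,
        reduceIte]
    · simpa using Qcolor_eval_bb hab
    · simpa using Qcolor_eval_ba hab
    · simpa using Qcolor_eval_ab (α := α) (β := β)
    · simpa using Qcolor_eval_aa hab
  calc ev (Qphi α β E V (colorOf α β c'))
      = ∏ j : E, ev (Qcolor α β (colorOf α β c' j) (xg α β E V j)) := map_prod ev _ _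
    _ = ∏ j : E, if c' j = c j then (1 : ℂ) else 0 := Finset.prod_congr rfl fun j _ => hfac j
    _ = if c' = c then 1 else 0 := by
        by_cases h : c' = c
        · subst h
          rw [if_pos rfl]
          exact Finset.prod_eq_one fun j _ => if_pos rfl
        · rw [if_neg h]
          obtain ⟨j, hj⟩ := Function.ne_iff.mp h
          exact Finset.prod_eq_zero (Finset.mem_univ j) (if_neg hj)

end derived


/-- The `Q_φ`, for `φ` ranging over admissible colorings, form a complete set of
orthogonal idempotents of `R(Γ)`: they sum to `1`, satisfy `Q_φ·Q_ψ = δ_{φψ}Q_φ`, and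
give a direct-sum decomposition `R(Γ) ≅ ⊕_{φ ∈ AC(Γ)} Q_φ·ℂ` into one-dimensional
summands. -/
theorem Qphi_complete_orthogonal_decomposition (α β : ℂ) (hab : α ≠ β)
    (E : Type) [Fintype E] [DecidableEq E] (V : Set (E × E)) :
    (∑ c : E → Bool, Qphi α β E V (colorOf α β c) = 1) ∧
    (∀ c c' : E → Bool,
      Qphi α β E V (colorOf α β c) * Qphi α β E V (colorOf α β c') =
        if c = c' then Qphi α β E V (colorOf α β c) else 0) ∧
    iSupIndep
      (fun c : {c : E → Bool // Admissible E V c} =>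
        (Submodule.span ℂ {Qphi α β E V (colorOf α β c.1)} : Submodule ℂ (RGamma α β E V))) ∧
    ((⊤ : Submodule ℂ (RGamma α β E V)) =
      ⨆ c : {c : E → Bool // Admissible E V c},
        Submodule.span ℂ {Qphi α β E V (colorOf α β c.1)}) ∧
    (∀ c : E → Bool, Admissible E V c → Qphi α β E V (colorOf α β c) ≠ 0) := by
  refine ⟨Qphi_sum α β hab E V, Qphi_orth α β hab E V, ?_, ?_, ?_⟩
  · -- independence
    intro i
    obtain ⟨ev, hev⟩ := exists_ev α β hab E V i.2
    refine Submodule.disjoint_def.mpr fun x hx hx' => ?_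
    obtain ⟨s, rfl⟩ := Submodule.mem_span_singleton.mp hx
    have hkerle : (⨆ (j : {c : E → Bool // Admissible E V c}) (_ : j ≠ i),
        Submodule.span ℂ {Qphi α β E V (colorOf α β j.1)}) ≤ LinearMap.ker ev.toLinearMap := by
      refine iSup_le fun j => iSup_le fun hj => ?_
      rw [Submodule.span_singleton_le_iff_mem, LinearMap.mem_ker, AlgHom.toLinearMap_apply,
        hev j.1, if_neg]
      exact fun h => hj (Subtype.ext h)
    have h0 : ev (s • Qphi α β E V (colorOf α β i.1)) = 0 := hkerle hx'
    rw [map_smul, hev i.1, if_pos rfl, smul_eq_mul, mul_one] at h0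
    rw [h0, zero_smul]
  · -- spanning
    rw [eq_comm, Submodule.eq_top_iff']
    intro r
    obtain ⟨y, rfl⟩ := Ideal.Quotient.mk_surjective r
    rw [show Ideal.Quotient.mk (relIdeal α β E V) y
        = ∑ c : E → Bool, Ideal.Quotient.mk (relIdeal α β E V) y * Qphi α β E V (colorOf α β c)
      by rw [← Finset.mul_sum, Qphi_sum α β hab E V, mul_one]]
    refine Submodule.sum_mem _ fun c _ => ?_
    obtain ⟨s, hs⟩ := mk_mul_Qphi α β hab E V c y
    rw [hs]
    by_cases hadm : Admissible E V c
    · exact Submodule.mem_iSup_of_mem ⟨c, hadm⟩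
        (Submodule.smul_mem _ _ (Submodule.mem_span_singleton_self _))
    · rw [Qphi_nonadmissible α β hab E V hadm, smul_zero]
      exact zero_mem _
  · intro c hc h0
    obtain ⟨ev, hev⟩ := exists_ev α β hab E V hc
    have h1 := hev c
    rw [h0, map_zero, if_pos rfl] at h1
    exact one_ne_zero h1.symm
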